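/- Let I_xr, I_xs, I_yr, I_ys, I_zr, I_zs, C_d, R, d be real constants with I_xr + I_xs ≠ 0, I_yr + I_ys ≠ 0, I_zr ≠ 0 and I_zs ≠ 0. Let h_x, h_y, h_z, Ω_x, Ω_y, Ω_z, β̇ : ℝ → ℝ with h_z, Ω_z, β̇ differentiable, and suppose for all t: (i) h_x = (I_xr + I_xs) Ω_x, (ii) h_y = (I_yr + I_ys) Ω_y, (iii) h_z = (I_zr + I_zs) Ω_z + I_zs β̇, (iv) h_z' = Ω_y h_x − Ω_x h_y, and (v) Ω_z' = C_d (R − d)² β̇ / I_zr (the friction law). Then for all t, β̈(t) = − β̇(t) C_d (R − d)² (I_zs + I_zr)/(I_zs I_zr) + h_x(t) h_y(t)/((I_yr + I_ys) I_zs) − h_x(t) h_y(t)/((I_xr + I_xs) I_zs), where β̈ denotes the derivative of β̇. -/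

import Mathlib

/-- **The ODE for `β̇` in the point-mass slug model.**
From the component relations between angular momentum and angular velocities,
the `z`-component of the angular momentum equation, and the friction law
`Ω_z' = C_d (R − d)² β̇ / I_zr`, one derives
`β̈ = −β̇ C_d (R − d)² (I_zs + I_zr)/(I_zs I_zr)
  + h_x h_y/((I_yr + I_ys) I_zs) − h_x h_y/((I_xr + I_xs) I_zs)`. -/
theorem betaddot_equation
    (Ixr Ixs Iyr Iys Izr Izs Cd R d : ℝ)
    (hx0 : Ixr + Ixs ≠ 0) (hy0 : Iyr + Iys ≠ 0) (hzr : Izr ≠ 0) (hzs : Izs ≠ 0)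
    (hX hY hZ ΩX ΩY ΩZ βdot : ℝ → ℝ)
    (hhz : Differentiable ℝ hZ) (hΩz : Differentiable ℝ ΩZ)
    (hβ : Differentiable ℝ βdot)
    (h1 : ∀ t : ℝ, hX t = (Ixr + Ixs) * ΩX t)
    (h2 : ∀ t : ℝ, hY t = (Iyr + Iys) * ΩY t)
    (h3 : ∀ t : ℝ, hZ t = (Izr + Izs) * ΩZ t + Izs * βdot t)
    (h4 : ∀ t : ℝ, deriv hZ t = ΩY t * hX t - ΩX t * hY t)
    (h5 : ∀ t : ℝ, deriv ΩZ t = Cd * (R - d) ^ 2 * βdot t / Izr) :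
    ∀ t : ℝ, deriv βdot t
      = -βdot t * Cd * (R - d) ^ 2 * (Izs + Izr) / (Izs * Izr)
        + hX t * hY t / ((Iyr + Iys) * Izs)
        - hX t * hY t / ((Ixr + Ixs) * Izs) := by
  intro t
  have hfun : hZ = fun s => (Izr + Izs) * ΩZ s + Izs * βdot s := funext h3
  have hd : deriv hZ t = (Izr + Izs) * deriv ΩZ t + Izs * deriv βdot t := by
    rw [hfun]
    rw [deriv_fun_add ((hΩz t).const_mul _) ((hβ t).const_mul _),
        deriv_const_mul _ (hΩz t), deriv_const_mul _ (hβ t)]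
  have e4 := h4 t
  rw [hd, h5 t] at e4
  have eΩX : ΩX t = hX t / (Ixr + Ixs) := by
    field_simp [h1 t]
    rw [h1 t]; ring
  have eΩY : ΩY t = hY t / (Iyr + Iys) := by
    field_simp [h2 t]
    rw [h2 t]; ring
  rw [eΩX, eΩY] at e4
  have hβd : deriv βdot t
      = (hY t / (Iyr + Iys) * hX t - hX t / (Ixr + Ixs) * hY t
          - (Izr + Izs) * (Cd * (R - d) ^ 2 * βdot t / Izr)) / Izs := by
    rw [eq_div_iff hzs]
    linarith [e4]
  rw [hβd]
  field_simp
  ring
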